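/- Let ξ* be a complex balanced steady state of a polyexponential system with stoichiometric subspace S. Then a point ζ ∈ ℝ^n is a steady state (i.e., φ(ζ) = 0) if and only if ζ - ξ* ∈ S^⊥. -/

import Mathlib

open scoped RealInnerProductSpace

/-- If the fluxes `f` are balanced at each vertex, then summing `f e • G e.1`
over edges equals summing `f e • G e.2`. -/
lemma fiber_swap {m : ℕ} {M : Type*} [AddCommMonoid M] [Module ℝ M]
    (E : Finset (Fin m × Fin m)) (f : Fin m × Fin m → ℝ)
    (hf : ∀ i : Fin m, ∑ e ∈ E.filter (fun e => e.1 = i), f e =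
      ∑ e ∈ E.filter (fun e => e.2 = i), f e)
    (G : Fin m → M) :
    ∑ e ∈ E, f e • G e.1 = ∑ e ∈ E, f e • G e.2 := by
  rw [← Finset.sum_fiberwise_of_maps_to (g := fun e => e.1)
      (fun e _ => Finset.mem_univ e.1) (fun e => f e • G e.1),
    ← Finset.sum_fiberwise_of_maps_to (g := fun e => e.2)
      (fun e _ => Finset.mem_univ e.2) (fun e => f e • G e.2)]
  refine Finset.sum_congr rfl fun i _ => ?_
  calc ∑ e ∈ E.filter (fun e => e.1 = i), f e • G e.1
      = (∑ e ∈ E.filter (fun e => e.1 = i), f e) • G i := by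
        rw [Finset.sum_smul]
        exact Finset.sum_congr rfl fun e he => by
          rw [(Finset.mem_filter.mp he).2]
    _ = (∑ e ∈ E.filter (fun e => e.2 = i), f e) • G i := by rw [hf]
    _ = ∑ e ∈ E.filter (fun e => e.2 = i), f e • G e.2 := by
        rw [Finset.sum_smul]
        exact Finset.sum_congr rfl fun e he => by
          rw [(Finset.mem_filter.mp he).2]

theorem steady_state_iff_perp {n m : ℕ}
    (y : Fin m → EuclideanSpace ℝ (Fin n))
    (E : Finset (Fin m × Fin m)) (hE : ∀ e ∈ E, e.1 ≠ e.2)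
    (κ : Fin m × Fin m → ℝ) (hκ : ∀ e ∈ E, 0 < κ e)
    (S : Submodule ℝ (EuclideanSpace ℝ (Fin n)))
    (hS : S = Submodule.span ℝ {v : EuclideanSpace ℝ (Fin n) | ∃ e ∈ E, v = y e.2 - y e.1})
    (ξs : EuclideanSpace ℝ (Fin n))
    (hcb : ∀ i : Fin m,
      ∑ e ∈ E.filter (fun e => e.1 = i), κ e * Real.exp ⟪ξs, y i⟫ =
      ∑ e ∈ E.filter (fun e => e.2 = i), κ e * Real.exp ⟪ξs, y e.1⟫)
    (ζ : EuclideanSpace ℝ (Fin n)) :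
    (∑ e ∈ E, (κ e * Real.exp ⟪ζ, y e.1⟫) • (y e.2 - y e.1)) = 0 ↔ ζ - ξs ∈ Sᗮ := by
  set u : EuclideanSpace ℝ (Fin n) := ζ - ξs with hu
  set F : Fin m × Fin m → ℝ := fun e => κ e * Real.exp ⟪ξs, y e.1⟫ with hF
  have hFpos : ∀ e ∈ E, 0 < F e := fun e he => mul_pos (hκ e he) (Real.exp_pos _)
  -- split of exponentials
  have hsplit : ∀ j : Fin m, Real.exp ⟪ζ, y j⟫ = Real.exp ⟪ξs, y j⟫ * Real.exp ⟪u, y j⟫ := by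
    intro j
    rw [← Real.exp_add]
    congr 1
    rw [hu, inner_sub_left]
    ring
  -- balanced form of hcb
  have hcb' : ∀ i : Fin m, ∑ e ∈ E.filter (fun e => e.1 = i), F e =
      ∑ e ∈ E.filter (fun e => e.2 = i), F e := by
    intro i
    calc ∑ e ∈ E.filter (fun e => e.1 = i), F e
        = ∑ e ∈ E.filter (fun e => e.1 = i), κ e * Real.exp ⟪ξs, y i⟫ := by
          refine Finset.sum_congr rfl fun e he => ?_
          simp only [hF]
          rw [(Finset.mem_filter.mp he).2]
      _ = ∑ e ∈ E.filter (fun e => e.2 = i), F e := hcb i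
  constructor
  · -- forward direction: steady state implies perpendicular
    intro h
    -- the inner product of u with the (zero) sum
    have h3 : ∑ e ∈ E, (F e * Real.exp ⟪u, y e.1⟫) * (⟪u, y e.2⟫ - ⟪u, y e.1⟫) = 0 := by
      have h2 := congrArg (fun v => (⟪u, v⟫ : ℝ)) h
      simp only [inner_zero_right] at h2
      rw [← h2, inner_sum]
      refine Finset.sum_congr rfl fun e he => ?_
      rw [real_inner_smul_right, inner_sub_right, hsplit e.1, hF]
      ring
    -- the telescoping sum is zero by complex balance
    have h4 : ∑ e ∈ E, F e * Real.exp ⟪u, y e.1⟫ = ∑ e ∈ E, F e * Real.exp ⟪u, y e.2⟫ := by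
      have := fiber_swap E F hcb' (fun i => Real.exp ⟪u, y i⟫)
      simpa [smul_eq_mul] using this
    -- so the total "convexity defect" is zero
    have hT : ∑ e ∈ E, F e * (Real.exp ⟪u, y e.2⟫ - Real.exp ⟪u, y e.1⟫
        - Real.exp ⟪u, y e.1⟫ * (⟪u, y e.2⟫ - ⟪u, y e.1⟫)) = 0 := by
      have expand : ∀ e ∈ E, F e * (Real.exp ⟪u, y e.2⟫ - Real.exp ⟪u, y e.1⟫
          - Real.exp ⟪u, y e.1⟫ * (⟪u, y e.2⟫ - ⟪u, y e.1⟫)) =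
          F e * Real.exp ⟪u, y e.2⟫ - F e * Real.exp ⟪u, y e.1⟫
          - (F e * Real.exp ⟪u, y e.1⟫) * (⟪u, y e.2⟫ - ⟪u, y e.1⟫) := by
        intro e _; ring
      rw [Finset.sum_congr rfl expand]
      rw [Finset.sum_sub_distrib, Finset.sum_sub_distrib, h3, h4]
      ring
    -- each term is nonnegative
    have hnonneg : ∀ e ∈ E, 0 ≤ F e * (Real.exp ⟪u, y e.2⟫ - Real.exp ⟪u, y e.1⟫
        - Real.exp ⟪u, y e.1⟫ * (⟪u, y e.2⟫ - ⟪u, y e.1⟫)) := by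
      intro e he
      refine mul_nonneg (hFpos e he).le ?_
      set a := ⟪u, y e.1⟫
      set b := ⟪u, y e.2⟫
      have h1 : (b - a) + 1 ≤ Real.exp (b - a) := Real.add_one_le_exp _
      have h2 : Real.exp b = Real.exp a * Real.exp (b - a) := by
        rw [← Real.exp_add]; ring_nf
      nlinarith [Real.exp_pos a]
    -- hence each term vanishes
    have hzero := (Finset.sum_eq_zero_iff_of_nonneg hnonneg).mp hT
    -- and so each inner product difference vanishes
    have hperp : ∀ e ∈ E, ⟪u, y e.2 - y e.1⟫ = 0 := by
      intro e he
      have hz := hzero e he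
      have hFne : F e ≠ 0 := (hFpos e he).ne'
      have hbr : Real.exp ⟪u, y e.2⟫ - Real.exp ⟪u, y e.1⟫
          - Real.exp ⟪u, y e.1⟫ * (⟪u, y e.2⟫ - ⟪u, y e.1⟫) = 0 := by
        rcases mul_eq_zero.mp hz with h' | h'
        · exact absurd h' hFne
        · exact h'
      set a := ⟪u, y e.1⟫
      set b := ⟪u, y e.2⟫
      have hab : b = a := by
        by_contra hne
        have hne' : b - a ≠ 0 := sub_ne_zero.mpr hne
        have h1 : (b - a) + 1 < Real.exp (b - a) := Real.add_one_lt_exp hne'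
        have h2 : Real.exp b = Real.exp a * Real.exp (b - a) := by
          rw [← Real.exp_add]; ring_nf
        nlinarith [Real.exp_pos a]
      rw [inner_sub_right]
      exact sub_eq_zero.mpr hab
    rw [hS, Submodule.mem_orthogonal]
    intro v hv
    refine Submodule.span_induction (fun w hw => ?_) (by simp) (fun w₁ w₂ _ _ h1 h2 => ?_)
      (fun c w _ h1 => ?_) hv
    · obtain ⟨e, he, rfl⟩ := hw
      rw [real_inner_comm]
      exact hperp e he
    · rw [inner_add_left, h1, h2]; ring
    · rw [inner_smul_left, h1]; simp
  · -- backward direction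
    intro hp
    have hperp : ∀ e ∈ E, ⟪u, y e.1⟫ = ⟪u, y e.2⟫ := by
      intro e he
      have hmem : y e.2 - y e.1 ∈ S := by
        rw [hS]
        exact Submodule.subset_span ⟨e, he, rfl⟩
      have := (Submodule.mem_orthogonal' S u).mp hp _ hmem
      rw [inner_sub_right] at this
      linarith [this]
    have key := fiber_swap E F hcb' (fun i => Real.exp ⟪u, y i⟫ • y i)
    calc ∑ e ∈ E, (κ e * Real.exp ⟪ζ, y e.1⟫) • (y e.2 - y e.1)
        = ∑ e ∈ E, (F e • (Real.exp ⟪u, y e.2⟫ • y e.2) - F e • (Real.exp ⟪u, y e.1⟫ • y e.1)) := by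
          refine Finset.sum_congr rfl fun e he => ?_
          rw [smul_sub, hsplit e.1, ← hperp e he, hF]
          rw [smul_smul, smul_smul]
          ring_nf
      _ = ∑ e ∈ E, F e • (Real.exp ⟪u, y e.2⟫ • y e.2)
          - ∑ e ∈ E, F e • (Real.exp ⟪u, y e.1⟫ • y e.1) := Finset.sum_sub_distrib _ _
      _ = 0 := by rw [← key]; exact sub_self _
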